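/- With notation as in the reduction setup (𝔤₁ = 𝔥₁ ⊕ 𝔪₁ a reductive decomposition with Ad(H₁)-invariant inner product (·,·)₁ on 𝔪₁, 𝔤 ⊆ 𝔤₁ a subalgebra with 𝔤₁ = 𝔥₁ ⊕ 𝔪 for 𝔪 ⊆ 𝔤, and the induced inner product (X,Y) := (π⁻¹X, π⁻¹Y)₁ on 𝔪), for every U ∈ 𝔥₁, the operator L(U,·) : 𝔪 → 𝔪 defined by L(U,X) = [U,X]_𝔪 (𝔪-component with respect to 𝔤₁ = 𝔥₁ ⊕ 𝔪) is skew-symmetric with respect to (·,·). -/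

import Mathlib

/-- In the reduction setup, for every U ∈ 𝔥₁ the operator
L(U,·) : 𝔪 → 𝔪, L(U,X) = [U,X]_𝔪 (𝔪-component w.r.t. 𝔤₁ = 𝔥₁ ⊕ 𝔪) is skew-symmetric
with respect to the inner product transported from (𝔪₁, ip₁) via the bijection
π : 𝔪₁ → 𝔪 (whose inverse on 𝔪 is the projection p1 onto 𝔪₁ along 𝔥₁), i.e.
(L(U,X), Y) + (X, L(U,Y)) = 0 where (X,Y) := ip₁ (p1 X) (p1 Y) for X, Y ∈ 𝔪. -/
theorem stmt2 {g1 : Type*} [LieRing g1] [LieAlgebra ℝ g1]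
    (h1 g : LieSubalgebra ℝ g1)
    (m1 : Submodule ℝ g1) (hcompl1 : IsCompl h1.toSubmodule m1)
    (hred : ∀ U ∈ h1, ∀ X ∈ m1, ⁅U, X⁆ ∈ m1)
    -- ip₁ is an inner product on 𝔪₁ :
    (ip1 : LinearMap.BilinForm ℝ g1)
    (hsymm : ∀ X ∈ m1, ∀ Y ∈ m1, ip1 X Y = ip1 Y X)
    (hpos : ∀ X ∈ m1, X ≠ 0 → 0 < ip1 X X)
    -- ip₁ is Ad(H₁)-invariant: ad(U)|𝔪₁ is skew-symmetric for all U ∈ 𝔥₁ :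
    (hskew1 : ∀ U ∈ h1, ∀ X ∈ m1, ∀ Y ∈ m1, ip1 ⁅U, X⁆ Y = - ip1 X ⁅U, Y⁆)
    (hsum : h1.toSubmodule ⊔ g.toSubmodule = ⊤)
    (m : Submodule ℝ g1) (hmg : m ≤ g.toSubmodule)
    (hcompl : IsCompl h1.toSubmodule m)
    -- pm : projection of 𝔤₁ onto 𝔪 along 𝔥₁
    (pm : g1 →ₗ[ℝ] g1) (hpm_m : ∀ x ∈ m, pm x = x) (hpm_h : ∀ x ∈ h1, pm x = 0)
    (hpm_ran : ∀ x, pm x ∈ m)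
    -- p1 : projection of 𝔤₁ onto 𝔪₁ along 𝔥₁ (its restriction to 𝔪 is π⁻¹)
    (p1 : g1 →ₗ[ℝ] g1) (hp1_m : ∀ x ∈ m1, p1 x = x) (hp1_h : ∀ x ∈ h1, p1 x = 0)
    (hp1_ran : ∀ x, p1 x ∈ m1) :
    ∀ U ∈ h1, ∀ X ∈ m, ∀ Y ∈ m,
      ip1 (p1 (pm ⁅U, X⁆)) (p1 Y) = - ip1 (p1 X) (p1 (pm ⁅U, Y⁆)) := by
  intro U hU X hX Y hY
  -- x - pm x ∈ h1 for all x
  have hsub : ∀ x : g1, x - pm x ∈ h1 := by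
    intro x
    have : x ∈ h1.toSubmodule ⊔ m := by rw [hcompl.sup_eq_top]; trivial
    obtain ⟨a, ha, b, hb, rfl⟩ := Submodule.mem_sup.mp this
    have : pm (a + b) = b := by
      rw [map_add, hpm_h a ha, hpm_m b hb, zero_add]
    rw [this]; simpa using ha
  have hp1pm : ∀ x : g1, p1 (pm x) = p1 x := by
    intro x
    have := hp1_h _ (hsub x)
    rw [map_sub] at this
    exact (sub_eq_zero.mp this).symm
  -- key: p1 ⁅U, Z⁆ = ⁅U, p1 Z⁆ for any Z
  have hkey : ∀ Z : g1, p1 ⁅U, Z⁆ = ⁅U, p1 Z⁆ := by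
    intro Z
    have hZh : Z - p1 Z ∈ h1 := by
      have : Z ∈ h1.toSubmodule ⊔ m1 := by rw [hcompl1.sup_eq_top]; trivial
      obtain ⟨a, ha, b, hb, rfl⟩ := Submodule.mem_sup.mp this
      have : p1 (a + b) = b := by
        rw [map_add, hp1_h a ha, hp1_m b hb, zero_add]
      rw [this]; simpa using ha
    have h1' : ⁅U, Z - p1 Z⁆ ∈ h1 := h1.lie_mem hU hZh
    have h2' : ⁅U, p1 Z⁆ ∈ m1 := hred U hU _ (hp1_ran Z)
    have : ⁅U, Z⁆ = ⁅U, Z - p1 Z⁆ + ⁅U, p1 Z⁆ := by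
      rw [← lie_add]
      congr 1
      abel
    rw [this, map_add, hp1_h _ h1', hp1_m _ h2', zero_add]
  rw [hp1pm, hp1pm, hkey, hkey]
  exact hskew1 U hU _ (hp1_ran X) _ (hp1_ran Y)
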